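/- For every positive integer m, the Reeve tetrahedron T_m = conv{(0,0,0), (1,0,0), (0,1,0), (1,1,m)} ⊆ ℝ³ satisfies 6·#(tT_m ∩ ℤ³) = m·t³ + 6·t² + (12 − m)·t + 6 for every t ∈ ℕ; in particular, when m ≥ 13 the linear coefficient (12 − m)/6 of the Ehrhart polynomial of T_m is negative. -/

import Mathlib

open Pointwise Finset

set_option maxHeartbeats 1000000


lemma gauss_int (n : ℕ) : 2 * ∑ y ∈ range n, (y:ℤ) = n * (n-1) := by
  induction n with
  | zero => simp
  | succ n ih => rw [sum_range_succ]; push_cast; push_cast at ih; ring_nf; ring_nf at ih; linarith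

lemma sum_max0 (k y : ℕ) :
    2 * ∑ x ∈ range (y+k+1), max 0 ((x:ℤ) + y - (y+k)) = y * (y+1) := by
  induction k with
  | zero =>
    push_cast
    have : ∀ x ∈ range (y+1), max 0 ((x:ℤ) + y - (y+0)) = (x:ℤ) := by
      intro x hx
      have : (0:ℤ) ≤ x := Int.natCast_nonneg x
      omega
    rw [show y+0+1 = y+1 from rfl, sum_congr rfl this, gauss_int]
    push_cast; ring
  | succ k ih =>
    push_cast at ih ⊢
    rw [show y+(k+1)+1 = (y+k+1)+1 by ring, sum_range_succ']
    have h0 : max 0 ((0:ℤ) + y - (y+((k:ℤ)+1))) = 0 := by omega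
    have h1 : ∀ x ∈ range (y+k+1), max 0 ((x:ℤ) + 1 + y - (y+((k:ℤ)+1))) = max 0 ((x:ℤ) + y - (y+k)) := by
      intro x hx; congr 1; ring
    push_cast
    rw [sum_congr rfl h1, h0, add_zero, ih]

lemma sum_min (k y : ℕ) :
    2 * ∑ x ∈ range (y+k+1), min (x:ℤ) y = y * (y+1) + 2*k*y := by
  induction k with
  | zero =>
    have : ∀ x ∈ range (y+1), min (x:ℤ) (y:ℤ) = (x:ℤ) := by
      intro x hx; simp at hx
      have : (x:ℤ) ≤ y := by exact_mod_cast hx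
      omega
    rw [show y+0+1 = y+1 from rfl, sum_congr rfl this, gauss_int]; push_cast; ring
  | succ k ih =>
    rw [show y+(k+1)+1 = (y+k+1)+1 by ring, sum_range_succ]
    have h2 : min ((y+k+1:ℕ):ℤ) (y:ℤ) = y := by push_cast; omega
    rw [h2, mul_add, ih]; push_cast; ring

lemma max0_mul (m : ℕ) (s : ℤ) : max 0 ((m:ℤ) * s) = (m:ℤ) * max 0 s := by
  rcases le_total s 0 with h | h
  · rw [max_eq_left (mul_nonpos_of_nonneg_of_nonpos (Int.natCast_nonneg m) h), max_eq_left h, mul_zero]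
  · rw [max_eq_right (mul_nonneg (Int.natCast_nonneg m) h), max_eq_right h]

lemma reeve_inner_sum (m t y : ℕ) (h : y ≤ t) :
    ∑ x ∈ range (t+1), ((m:ℤ) * min (x:ℤ) (y:ℤ) + 1 - max 0 ((m:ℤ)*((x:ℤ)+y-t)))
      = m*y*((t:ℤ)-y) + (t+1) := by
  obtain ⟨k, rfl⟩ : ∃ k, t = y + k := ⟨t - y, by omega⟩
  have h1 := sum_min k y
  have h2 := sum_max0 k y
  have key : 2 * ∑ x ∈ range (y+k+1), ((m:ℤ) * min (x:ℤ) (y:ℤ) + 1 - max 0 ((m:ℤ)*((x:ℤ)+y-(y+k))))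
      = 2 * ((m:ℤ)*y*(((y+k:ℕ):ℤ)-y) + (((y+k:ℕ):ℤ)+1)) := by
    have : ∀ x ∈ range (y+k+1), ((m:ℤ) * min (x:ℤ) (y:ℤ) + 1 - max 0 ((m:ℤ)*((x:ℤ)+y-(y+k))))
        = (m:ℤ) * min (x:ℤ) (y:ℤ) + 1 - (m:ℤ) * max 0 ((x:ℤ)+y-(y+k)) := by
      intro x hx; rw [max0_mul]
    rw [sum_congr rfl this]
    simp only [Finset.sum_sub_distrib, Finset.sum_add_distrib, ← Finset.mul_sum, Finset.sum_const, card_range, nsmul_eq_mul]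
    push_cast at h1 h2 ⊢
    linear_combination (m:ℤ) * h1 - (m:ℤ) * h2
  exact mul_left_cancel₀ (by norm_num) key

lemma reeve_outer_sum (m t : ℕ) :
    6 * ∑ y ∈ range (t+1), ((m:ℤ)*y*((t:ℤ)-y) + (t+1))
      = (m:ℤ) * (t:ℤ)^3 + 6*(t:ℤ)^2 + (12 - (m:ℤ))*t + 6 := by
  induction t with
  | zero => simp
  | succ t ih =>
    have hg := gauss_int (t+1)
    rw [sum_range_succ]
    have h1 : ∀ y ∈ range (t+1), ((m:ℤ)*y*(((t+1:ℕ):ℤ)-y) + (((t+1:ℕ):ℤ)+1))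
        = ((m:ℤ)*y*((t:ℤ)-y) + (t+1)) + ((m:ℤ)*y + 1) := by
      intro y hy; push_cast; ring
    rw [sum_congr rfl h1]
    simp only [Finset.sum_add_distrib, ← Finset.mul_sum, Finset.sum_const, card_range, nsmul_eq_mul] at ih ⊢
    push_cast at hg ih ⊢
    linear_combination ih + 3 * (m:ℤ) * hg

noncomputable def reeveF (m t : ℕ) : Finset (ℕ × ℕ × ℤ) :=
  (range (t+1) ×ˢ range (t+1)).biUnion fun p =>
    (Finset.Icc (max 0 ((m:ℤ)*((p.1:ℤ)+(p.2:ℤ)-(t:ℤ)))) ((m:ℤ) * min (p.1:ℤ) (p.2:ℤ))).image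
      fun z => (p.1, p.2, z)

lemma reeveF_card (m t : ℕ) :
    6 * ((reeveF m t).card : ℤ)
      = (m:ℤ) * (t:ℤ)^3 + 6*(t:ℤ)^2 + (12 - (m:ℤ))*(t:ℤ) + 6 := by
  have hdisj : ∀ p ∈ range (t+1) ×ˢ range (t+1), ∀ q ∈ range (t+1) ×ˢ range (t+1), p ≠ q →
      Disjoint ((Finset.Icc (max 0 ((m:ℤ)*((p.1:ℤ)+(p.2:ℤ)-(t:ℤ)))) ((m:ℤ) * min (p.1:ℤ) (p.2:ℤ))).image
        (fun z => (p.1, p.2, z)))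
        ((Finset.Icc (max 0 ((m:ℤ)*((q.1:ℤ)+(q.2:ℤ)-(t:ℤ)))) ((m:ℤ) * min (q.1:ℤ) (q.2:ℤ))).image
        (fun z => (q.1, q.2, z))) := by
    intro p _ q _ hpq
    rw [Finset.disjoint_left]
    rintro a ha hb
    obtain ⟨z, _, rfl⟩ := Finset.mem_image.mp ha
    obtain ⟨z', _, h⟩ := Finset.mem_image.mp hb
    apply hpq
    simp only [Prod.ext_iff] at h ⊢
    exact ⟨h.1.symm, h.2.1.symm⟩
  have hcard : (reeveF m t).card
      = ∑ p ∈ range (t+1) ×ˢ range (t+1),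
          (Finset.Icc (max 0 ((m:ℤ)*((p.1:ℤ)+(p.2:ℤ)-(t:ℤ)))) ((m:ℤ) * min (p.1:ℤ) (p.2:ℤ))).card := by
    rw [reeveF, Finset.card_biUnion hdisj]
    refine Finset.sum_congr rfl fun p _ => ?_
    exact Finset.card_image_of_injective _ (fun a b hab => by
      simp only [Prod.mk.injEq] at hab; exact hab.2.2)
  have hle : ∀ p ∈ range (t+1) ×ˢ range (t+1),
      max 0 ((m:ℤ)*((p.1:ℤ)+(p.2:ℤ)-(t:ℤ))) ≤ (m:ℤ) * min (p.1:ℤ) (p.2:ℤ) + 1 := by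
    intro p hp
    obtain ⟨hp1, hp2⟩ := Finset.mem_product.mp hp
    have hx : (p.1:ℤ) ≤ t := by exact_mod_cast Nat.lt_succ_iff.mp (mem_range.mp hp1)
    have hy : (p.2:ℤ) ≤ t := by exact_mod_cast Nat.lt_succ_iff.mp (mem_range.mp hp2)
    have hmin : (p.1:ℤ) + (p.2:ℤ) - t ≤ min (p.1:ℤ) (p.2:ℤ) :=
      le_min (by linarith) (by linarith)
    have h1 : (m:ℤ)*((p.1:ℤ)+(p.2:ℤ)-(t:ℤ)) ≤ (m:ℤ) * min (p.1:ℤ) (p.2:ℤ) :=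
      mul_le_mul_of_nonneg_left hmin (Int.natCast_nonneg m)
    have h2 : (0:ℤ) ≤ (m:ℤ) * min (p.1:ℤ) (p.2:ℤ) :=
      mul_nonneg (Int.natCast_nonneg m) (le_min (Int.natCast_nonneg _) (Int.natCast_nonneg _))
    have := max_le h2 h1
    linarith
  have hcast : ((reeveF m t).card : ℤ)
      = ∑ p ∈ range (t+1) ×ˢ range (t+1),
          ((m:ℤ) * min (p.1:ℤ) (p.2:ℤ) + 1 - max 0 ((m:ℤ)*((p.1:ℤ)+(p.2:ℤ)-(t:ℤ)))) := by
    rw [hcard, Nat.cast_sum]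
    refine Finset.sum_congr rfl fun p hp => ?_
    rw [Int.card_Icc_of_le (h := hle p hp)]
  rw [hcast, Finset.sum_product]
  have hin : ∀ x ∈ range (t+1),
      ∑ y ∈ range (t+1), ((m:ℤ) * min ((x:ℕ):ℤ) ((y:ℕ):ℤ) + 1 - max 0 ((m:ℤ)*(((x:ℕ):ℤ)+((y:ℕ):ℤ)-(t:ℤ))))
        = (m:ℤ)*x*((t:ℤ)-x) + (t+1) := by
    intro x hx
    have hc : ∀ y ∈ range (t+1),
        ((m:ℤ) * min ((x:ℕ):ℤ) ((y:ℕ):ℤ) + 1 - max 0 ((m:ℤ)*(((x:ℕ):ℤ)+((y:ℕ):ℤ)-(t:ℤ))))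
          = ((m:ℤ) * min ((y:ℕ):ℤ) ((x:ℕ):ℤ) + 1 - max 0 ((m:ℤ)*(((y:ℕ):ℤ)+((x:ℕ):ℤ)-(t:ℤ)))) := by
      intro y hy
      rw [min_comm]
      ring_nf
    rw [Finset.sum_congr rfl hc, reeve_inner_sum m t x (Nat.lt_succ_iff.mp (mem_range.mp hx))]
  rw [Finset.sum_congr rfl hin, reeve_outer_sum m t]


lemma reeve_mem (m : ℕ) (hm : 1 ≤ m) (t : ℕ) (v : Fin 3 → ℝ) :
    v ∈ (t:ℝ) • (convexHull ℝ {![0,0,0], ![1,0,0], ![0,1,0], ![1,1,(m:ℝ)]} : Set (Fin 3 → ℝ)) ↔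
    (0 ≤ v 2 ∧ v 2 ≤ m * v 0 ∧ v 2 ≤ m * v 1 ∧ (m:ℝ)*(v 0 + v 1 - t) ≤ v 2) := by
  have hm' : (0:ℝ) < m := by exact_mod_cast Nat.pos_of_ne_zero (by omega)
  have ht0 : (0:ℝ) ≤ t := Nat.cast_nonneg t
  rw [← convexHull_smul]
  constructor
  · intro hv
    have hsub : ((t:ℝ) • ({![0,0,0], ![1,0,0], ![0,1,0], ![1,1,(m:ℝ)]} : Set (Fin 3 → ℝ))) ⊆
        {w : Fin 3 → ℝ | 0 ≤ w 2 ∧ w 2 ≤ m * w 0 ∧ w 2 ≤ m * w 1 ∧ (m:ℝ)*(w 0 + w 1 - t) ≤ w 2} := by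
      rintro w ⟨p, hp, rfl⟩
      simp only [Set.mem_insert_iff, Set.mem_singleton_iff] at hp
      rcases hp with rfl | rfl | rfl | rfl <;>
        refine ⟨?_, ?_, ?_, ?_⟩ <;> simp <;> nlinarith [hm', ht0]
    have hconv : Convex ℝ
        {w : Fin 3 → ℝ | 0 ≤ w 2 ∧ w 2 ≤ m * w 0 ∧ w 2 ≤ m * w 1 ∧ (m:ℝ)*(w 0 + w 1 - t) ≤ w 2} := by
      intro u hu w hw a b ha hb hab
      simp only [Set.mem_setOf_eq, Pi.add_apply, Pi.smul_apply, smul_eq_mul] at *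
      refine ⟨by nlinarith [hu.1, hw.1], by nlinarith [hu.2.1, hw.2.1],
        by nlinarith [hu.2.2.1, hw.2.2.1], by nlinarith [hu.2.2.2, hw.2.2.2]⟩
    exact convexHull_min hsub hconv hv
  · rintro ⟨h0, h1, h2, h3⟩
    rcases Nat.eq_zero_or_pos t with rfl | htpos
    · have hc0 : (0:ℝ) = ((0:ℕ):ℝ) := by norm_num
      rw [← hc0] at h3 ⊢
      have hy : v 1 = 0 := by nlinarith
      have hz : v 2 = 0 := by nlinarith
      have hx : v 0 = 0 := by nlinarith
      have : v = (0:ℝ) • (![0,0,0] : Fin 3 → ℝ) := by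
        funext i
        fin_cases i <;> simp [hx, hy, hz]
      rw [this]
      exact subset_convexHull ℝ _ (Set.smul_mem_smul_set (Set.mem_insert _ _))
    · have ht : (0:ℝ) < t := by exact_mod_cast htpos
      have hmt : (m:ℝ) * t ≠ 0 := by positivity
      have hveq : v = ((m*(t - v 0 - v 1) + v 2)/(m*t)) • ((t:ℝ) • (![0,0,0] : Fin 3 → ℝ))
          + ((m*(v 0) - v 2)/(m*t)) • ((t:ℝ) • (![1,0,0] : Fin 3 → ℝ))
          + ((m*(v 1) - v 2)/(m*t)) • ((t:ℝ) • (![0,1,0] : Fin 3 → ℝ))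
          + ((v 2)/(m*t)) • ((t:ℝ) • (![1,1,(m:ℝ)] : Fin 3 → ℝ)) := by
        funext j
        fin_cases j
        · show v 0 = _
          simp only [Fin.reduceFinMk, Fin.zero_eta, Fin.mk_one, Pi.add_apply, Pi.smul_apply, smul_eq_mul, Matrix.cons_val_zero,
            Matrix.cons_val_one, Matrix.head_cons, Matrix.cons_val_two, Matrix.tail_cons]
          field_simp
          ring
        · show v 1 = _
          simp only [Fin.reduceFinMk, Fin.zero_eta, Fin.mk_one, Pi.add_apply, Pi.smul_apply, smul_eq_mul, Matrix.cons_val_zero,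
            Matrix.cons_val_one, Matrix.head_cons, Matrix.cons_val_two, Matrix.tail_cons]
          field_simp
          ring
        · show v 2 = _
          simp only [Fin.reduceFinMk, Fin.zero_eta, Fin.mk_one, Pi.add_apply, Pi.smul_apply, smul_eq_mul, Matrix.cons_val_zero,
            Matrix.cons_val_one, Matrix.head_cons, Matrix.cons_val_two, Matrix.tail_cons,
            mul_zero, mul_one, add_zero, zero_add]
          rw [show (t:ℝ)*(m:ℝ) = (m:ℝ)*(t:ℝ) from mul_comm _ _, div_mul_cancel₀ _ hmt]
      have hexp : ((m*(t - v 0 - v 1) + v 2)/(m*t)) • ((t:ℝ) • (![0,0,0] : Fin 3 → ℝ))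
          + ((m*(v 0) - v 2)/(m*t)) • ((t:ℝ) • (![1,0,0] : Fin 3 → ℝ))
          + ((m*(v 1) - v 2)/(m*t)) • ((t:ℝ) • (![0,1,0] : Fin 3 → ℝ))
          + ((v 2)/(m*t)) • ((t:ℝ) • (![1,1,(m:ℝ)] : Fin 3 → ℝ))
          = ∑ i : Fin 4, (![(m*(t - v 0 - v 1) + v 2)/(m*t), (m*(v 0) - v 2)/(m*t),
              (m*(v 1) - v 2)/(m*t), (v 2)/(m*t)] : Fin 4 → ℝ) i •
              (![(t:ℝ) • ![0,0,0], (t:ℝ) • ![1,0,0], (t:ℝ) • ![0,1,0],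
                (t:ℝ) • ![1,1,(m:ℝ)]] : Fin 4 → Fin 3 → ℝ) i := by
        rw [Fin.sum_univ_four]
        simp only [Fin.reduceFinMk, Fin.zero_eta, Fin.mk_one, Matrix.cons_val_zero, Matrix.cons_val_one, Matrix.head_cons,
          Matrix.cons_val_two, Matrix.tail_cons, Matrix.cons_val_three]
      rw [hveq, hexp]
      have hC := convex_convexHull ℝ ((t:ℝ) • ({![0,0,0], ![1,0,0], ![0,1,0], ![1,1,(m:ℝ)]} : Set (Fin 3 → ℝ)))
      refine hC.sum_mem (fun i _ => ?_) ?_ (fun i _ => subset_convexHull ℝ _ ?_)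
      · fin_cases i <;>
          · simp only [Fin.reduceFinMk, Fin.zero_eta, Fin.mk_one, Matrix.cons_val_zero, Matrix.cons_val_one, Matrix.head_cons,
              Matrix.cons_val_two, Matrix.tail_cons, Matrix.cons_val_three]
            refine div_nonneg (by nlinarith) (by positivity)
      · rw [Fin.sum_univ_four]
        simp only [Fin.reduceFinMk, Fin.zero_eta, Fin.mk_one, Matrix.cons_val_zero, Matrix.cons_val_one, Matrix.head_cons,
          Matrix.cons_val_two, Matrix.tail_cons, Matrix.cons_val_three]
        field_simp
        ring
      · fin_cases i <;>
          simp only [Fin.reduceFinMk, Fin.zero_eta, Fin.mk_one, Matrix.cons_val_zero, Matrix.cons_val_one, Matrix.head_cons,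
            Matrix.cons_val_two, Matrix.tail_cons, Matrix.cons_val_three]
        · exact Set.smul_mem_smul_set (Set.mem_insert _ _)
        · exact Set.smul_mem_smul_set (Set.mem_insert_of_mem _ (Set.mem_insert _ _))
        · exact Set.smul_mem_smul_set (Set.mem_insert_of_mem _ (Set.mem_insert_of_mem _ (Set.mem_insert _ _)))
        · exact Set.smul_mem_smul_set (Set.mem_insert_of_mem _ (Set.mem_insert_of_mem _ (Set.mem_insert_of_mem _ rfl)))


lemma mem_reeveF (m t : ℕ) (p : ℕ × ℕ × ℤ) :
    p ∈ reeveF m t ↔ p.1 < t+1 ∧ p.2.1 < t+1 ∧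
      max 0 ((m:ℤ)*((p.1:ℤ)+(p.2.1:ℤ)-(t:ℤ))) ≤ p.2.2 ∧
      p.2.2 ≤ (m:ℤ) * min (p.1:ℤ) (p.2.1:ℤ) := by
  constructor
  · intro h
    obtain ⟨q, hq, himg⟩ := Finset.mem_biUnion.mp h
    obtain ⟨z, hz, rfl⟩ := Finset.mem_image.mp himg
    obtain ⟨hq1, hq2⟩ := Finset.mem_product.mp hq
    obtain ⟨hz1, hz2⟩ := Finset.mem_Icc.mp hz
    exact ⟨mem_range.mp hq1, mem_range.mp hq2, hz1, hz2⟩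
  · rintro ⟨h1, h2, h3, h4⟩
    exact Finset.mem_biUnion.mpr ⟨(p.1, p.2.1),
      Finset.mem_product.mpr ⟨mem_range.mpr h1, mem_range.mpr h2⟩,
      Finset.mem_image.mpr ⟨p.2.2, Finset.mem_Icc.mpr ⟨h3, h4⟩, rfl⟩⟩

/-- The Reeve tetrahedron `T_m = conv{(0,0,0),(1,0,0),(0,1,0),(1,1,m)}` satisfies
`6·i(T_m,t) = m t³ + 6 t² + (12 − m) t + 6`; in particular for `m ≥ 13` the linear
coefficient `(12 − m)/6` of its Ehrhart polynomial is negative. -/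
theorem stmt_19 (m : ℕ) (hm : 1 ≤ m)
    (T : Set (Fin 3 → ℝ))
    (hT : T = convexHull ℝ
      {![0, 0, 0], ![1, 0, 0], ![0, 1, 0], ![1, 1, (m : ℝ)]}) :
    (∀ t : ℕ,
      6 * ({x : Fin 3 → ℝ | x ∈ (t : ℝ) • T ∧ ∀ i, ∃ z : ℤ, x i = (z : ℝ)}.ncard : ℤ) =
        (m : ℤ) * (t : ℤ) ^ 3 + 6 * (t : ℤ) ^ 2 + (12 - (m : ℤ)) * (t : ℤ) + 6) ∧
    (13 ≤ m → (12 - (m : ℚ)) / 6 < 0) := by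
  subst hT
  constructor
  · intro t
    have hm0 : (0:ℤ) < m := by exact_mod_cast hm
    have hinj : Function.Injective
        (fun p : ℕ×ℕ×ℤ => (![(p.1:ℝ), (p.2.1:ℝ), (p.2.2:ℝ)] : Fin 3 → ℝ)) := by
      intro a b h
      have h0 := congrFun h 0
      have h1 := congrFun h 1
      have h2 := congrFun h 2
      simp only [Matrix.cons_val_zero, Matrix.cons_val_one, Matrix.head_cons,
        Matrix.cons_val_two, Matrix.tail_cons] at h0 h1 h2
      exact Prod.ext_iff.mpr ⟨Nat.cast_injective h0,
        Prod.ext_iff.mpr ⟨Nat.cast_injective h1, Int.cast_injective h2⟩⟩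
    have hset : {x : Fin 3 → ℝ | x ∈ (t : ℝ) • (convexHull ℝ
          {![0, 0, 0], ![1, 0, 0], ![0, 1, 0], ![1, 1, (m : ℝ)]} : Set (Fin 3 → ℝ))
          ∧ ∀ i, ∃ z : ℤ, x i = (z : ℝ)}
        = ↑((reeveF m t).image (fun p : ℕ×ℕ×ℤ => (![(p.1:ℝ), (p.2.1:ℝ), (p.2.2:ℝ)] : Fin 3 → ℝ))) := by
      ext v
      simp only [Set.mem_setOf_eq, Finset.coe_image, Set.mem_image, Finset.mem_coe]
      constructor
      · rintro ⟨hvT, hint⟩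
        obtain ⟨z0, hz0⟩ := hint 0
        obtain ⟨z1, hz1⟩ := hint 1
        obtain ⟨z2, hz2⟩ := hint 2
        obtain ⟨h0, h1, h2, h3⟩ := (reeve_mem m hm t v).mp hvT
        rw [hz2] at h0
        rw [hz2, hz0] at h1
        rw [hz2, hz1] at h2
        rw [hz0, hz1, hz2] at h3
        have i0 : (0:ℤ) ≤ z2 := by exact_mod_cast h0
        have i1 : z2 ≤ m * z0 := by exact_mod_cast h1
        have i2 : z2 ≤ m * z1 := by exact_mod_cast h2
        have i3 : (m:ℤ) * (z0 + z1 - t) ≤ z2 := by exact_mod_cast h3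
        have hx0 : 0 ≤ z0 := by nlinarith
        have hy0 : 0 ≤ z1 := by nlinarith
        have hxt : z0 ≤ t := by nlinarith
        have hyt : z1 ≤ t := by nlinarith
        refine ⟨(z0.toNat, z1.toNat, z2), ?_, ?_⟩
        · rw [mem_reeveF]
          have e0 : ((z0.toNat : ℕ) : ℤ) = z0 := Int.toNat_of_nonneg hx0
          have e1 : ((z1.toNat : ℕ) : ℤ) = z1 := Int.toNat_of_nonneg hy0
          refine ⟨show z0.toNat < t+1 by omega, show z1.toNat < t+1 by omega, ?_, ?_⟩
          · show max 0 ((m:ℤ)*(((z0.toNat:ℕ):ℤ)+((z1.toNat:ℕ):ℤ)-(t:ℤ))) ≤ z2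
            rw [e0, e1]
            exact max_le i0 i3
          · show z2 ≤ (m:ℤ) * min ((z0.toNat:ℕ):ℤ) ((z1.toNat:ℕ):ℤ)
            rw [e0, e1]
            rcases le_total z0 z1 with h | h
            · rw [min_eq_left h]; exact i1
            · rw [min_eq_right h]; exact i2
        · funext j
          fin_cases j
          · show ((z0.toNat : ℕ) : ℝ) = v 0
            rw [hz0]
            exact_mod_cast congrArg (fun r : ℤ => (r:ℝ)) (Int.toNat_of_nonneg hx0)
          · show ((z1.toNat : ℕ) : ℝ) = v 1
            rw [hz1]
            exact_mod_cast congrArg (fun r : ℤ => (r:ℝ)) (Int.toNat_of_nonneg hy0)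
          · show ((z2 : ℤ) : ℝ) = v 2
            rw [hz2]
      · rintro ⟨p, hp, rfl⟩
        rw [mem_reeveF] at hp
        obtain ⟨h1, h2, h3, h4⟩ := hp
        have k0 : (0:ℤ) ≤ p.2.2 := le_trans (le_max_left _ _) h3
        have k3 : (m:ℤ)*((p.1:ℤ)+(p.2.1:ℤ)-(t:ℤ)) ≤ p.2.2 := le_trans (le_max_right _ _) h3
        have k1 : p.2.2 ≤ (m:ℤ) * p.1 :=
          le_trans h4 (mul_le_mul_of_nonneg_left (min_le_left _ _) (le_of_lt hm0))
        have k2 : p.2.2 ≤ (m:ℤ) * p.2.1 :=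
          le_trans h4 (mul_le_mul_of_nonneg_left (min_le_right _ _) (le_of_lt hm0))
        constructor
        · apply (reeve_mem m hm t _).mpr
          refine ⟨?_, ?_, ?_, ?_⟩ <;>
            simp only [Matrix.cons_val_zero, Matrix.cons_val_one, Matrix.head_cons,
              Matrix.cons_val_two, Matrix.tail_cons]
          · exact_mod_cast k0
          · exact_mod_cast k1
          · exact_mod_cast k2
          · exact_mod_cast k3
        · intro i
          fin_cases i
          · exact ⟨(p.1 : ℤ), by push_cast; rfl⟩
          · exact ⟨(p.2.1 : ℤ), by push_cast; rfl⟩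
          · exact ⟨p.2.2, rfl⟩
    rw [hset, Set.ncard_coe_finset, Finset.card_image_of_injective _ hinj]
    exact reeveF_card m t
  · intro h13
    have : (13:ℚ) ≤ (m:ℚ) := by exact_mod_cast h13
    apply div_neg_of_neg_of_pos
    · linarith
    · norm_num
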